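/- There exist two 3×3 tables of nonnegative integers with equal row and column sums, both vanishing on the diagonal cells (1,1), (2,2), (3,3), that cannot be connected by basic moves if all intermediate tables are required to be nonnegative and to vanish on the diagonal. Specifically, the permutation matrices of the two 3-cycles (which are 0 on the diagonal) have equal row and column sums (all equal to 1) but no single basic move applied to either keeps the table nonnegative with zero diagonal. -/

import Mathlib

/-- The basic move at rows `i1 ≠ i2` and columns `j1 ≠ j2`. -/
def basicMove {I J : ℕ} (i1 i2 : Fin I) (j1 j2 : Fin J) : Fin I × Fin J → ℤ :=
  fun p => (if p = (i1, j1) then 1 else 0) + (if p = (i2, j2) then 1 else 0)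
    - (if p = (i1, j2) then 1 else 0) - (if p = (i2, j1) then 1 else 0)

/-- The permutation matrix of the 3-cycle (1 2 3). -/
def n₁ : Fin 3 × Fin 3 → ℕ := fun p => if p = (0, 1) ∨ p = (1, 2) ∨ p = (2, 0) then 1 else 0

/-- The permutation matrix of the 3-cycle (1 3 2). -/
def n₂ : Fin 3 × Fin 3 → ℕ := fun p => if p = (0, 2) ∨ p = (1, 0) ∨ p = (2, 1) then 1 else 0

lemma noMove1 : ∀ t ∈ [n₁, n₂], ∀ (i1 i2 j1 j2 : Fin 3), i1 ≠ i2 → j1 ≠ j2 → ∀ ε : ℤ,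
      ε = 1 ∨ ε = -1 →
      ¬ (∀ p : Fin 3 × Fin 3,
          0 ≤ (t p : ℤ) + ε * basicMove i1 i2 j1 j2 p ∧
          (p.1 = p.2 → (t p : ℤ) + ε * basicMove i1 i2 j1 j2 p = 0)) := by
  intro t ht i1 i2 j1 j2 h1 h2 ε hε
  simp only [List.mem_cons, List.mem_singleton, List.not_mem_nil, or_false] at ht
  rcases ht with rfl | rfl <;> rcases hε with rfl | rfl <;>
    revert h1 h2 <;> revert i1 i2 j1 j2 <;> decide

/-- The two 3×3 permutation matrices of the fixed-point-free permutations of `{1,2,3}`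
have equal row and column sums (all `1`) and zero diagonal, yet they cannot be connected
by basic moves through nonnegative tables with zero diagonal: indeed no single signed
basic move applied to either of them keeps the table nonnegative with zero diagonal. -/
theorem diagonal_zero_not_connected :
    (∀ i : Fin 3, ∑ j, n₁ (i, j) = ∑ j, n₂ (i, j)) ∧
    (∀ j : Fin 3, ∑ i, n₁ (i, j) = ∑ i, n₂ (i, j)) ∧
    (∀ i : Fin 3, n₁ (i, i) = 0 ∧ n₂ (i, i) = 0) ∧
    ¬ (∃ L : List (Fin 3 × Fin 3 → ℤ),
        (∀ m ∈ L, ∃ (i1 i2 j1 j2 : Fin 3), i1 ≠ i2 ∧ j1 ≠ j2 ∧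
          (m = basicMove i1 i2 j1 j2 ∨ m = -basicMove i1 i2 j1 j2)) ∧
        ((fun p => (n₁ p : ℤ)) + L.sum = fun p => (n₂ p : ℤ)) ∧
        (∀ k : ℕ, ∀ p : Fin 3 × Fin 3,
          0 ≤ (n₁ p : ℤ) + (L.take k).sum p ∧
          (p.1 = p.2 → (n₁ p : ℤ) + (L.take k).sum p = 0))) ∧
    (∀ t ∈ [n₁, n₂], ∀ (i1 i2 j1 j2 : Fin 3), i1 ≠ i2 → j1 ≠ j2 → ∀ ε : ℤ,
      ε = 1 ∨ ε = -1 →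
      ¬ (∀ p : Fin 3 × Fin 3,
          0 ≤ (t p : ℤ) + ε * basicMove i1 i2 j1 j2 p ∧
          (p.1 = p.2 → (t p : ℤ) + ε * basicMove i1 i2 j1 j2 p = 0))) := by
  refine ⟨by decide, by decide, by decide, ?_, noMove1⟩
  rintro ⟨L, hmoves, hsum, hcons⟩
  match L with
  | [] =>
    have := congrFun hsum (0, 1)
    simp [n₁, n₂] at this
  | m :: rest =>
    obtain ⟨i1, i2, j1, j2, h1, h2, hm⟩ := hmoves m List.mem_cons_self
    have key : ∀ p : Fin 3 × Fin 3,
        0 ≤ (n₁ p : ℤ) + m p ∧ (p.1 = p.2 → (n₁ p : ℤ) + m p = 0) := by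
      intro p
      have := hcons 1 p
      simpa using this
    rcases hm with rfl | rfl
    · exact noMove1 n₁ (by simp) i1 i2 j1 j2 h1 h2 1 (Or.inl rfl)
        (fun p => by simpa using key p)
    · exact noMove1 n₁ (by simp) i1 i2 j1 j2 h1 h2 (-1) (Or.inr rfl)
        (fun p => by have := key p; simpa [neg_mul, ← sub_eq_add_neg, sub_eq_add_neg] using this)
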